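/- With ρ_x as above, for any two distinct syndromes x ≠ x' in GF(2)^{r+m}, every nonzero matrix entry of the difference Δρ = ρ_x − ρ_{x'} (in the Hadamard-rotated basis) occurs at a position (α, α') with α ⊕ α' a nonzero element of C₀^⊥. In particular, all diagonal entries of Δρ vanish, and if the minimum Hamming weight of nonzero elements of C₀^⊥ exceeds D, then (Δρ)_{α,α'} ≠ 0 implies d(α, α') > D. -/

import Mathlib

open Matrix

/-- The GF(2) inner product `α ⊙ β = ⊕ᵢ αᵢ βᵢ`. -/
def dotp {N : ℕ} (α β : Fin N → ZMod 2) : ZMod 2 := ∑ i, α i * β i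

/-- The sign `(-1)^z ∈ ℂ` attached to `z ∈ GF(2)`. -/
def sgn (z : ZMod 2) : ℂ := (-1 : ℂ) ^ z.val

/-- The Hadamard-rotated basis vector `|φ_α⟩ = H^{⊗N}|ψ_α⟩`. -/
noncomputable def hcol {N : ℕ} (α : Fin N → ZMod 2) : (Fin N → ZMod 2) → ℂ :=
  fun β => ((Real.sqrt 2 : ℂ))⁻¹ ^ N * sgn (dotp α β)

/-- The uniform mixture of computational-basis projectors over `S ⊆ GF(2)^N`. -/
noncomputable def mix {N : ℕ} (S : Set (Fin N → ZMod 2)) :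
    Matrix (Fin N → ZMod 2) (Fin N → ZMod 2) ℂ :=
  (Nat.card S : ℂ)⁻¹ • ∑ β ∈ (Set.toFinite S).toFinset, Matrix.single β β 1

lemma sgn_add (a b : ZMod 2) : sgn (a + b) = sgn a * sgn b := by
  rw [sgn, sgn, sgn, ← pow_add, ZMod.val_add]
  rcases Nat.even_or_odd (a.val + b.val) with h | h
  · rw [h.neg_one_pow, Nat.even_iff.mp h, pow_zero]
  · rw [h.neg_one_pow, Nat.odd_iff.mp h, pow_one]

lemma dotp_add_left {N : ℕ} (α α' β : Fin N → ZMod 2) :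
    dotp (α + α') β = dotp α β + dotp α' β := by
  simp [dotp, add_mul, Finset.sum_add_distrib]

lemma mix_mulVec {N : ℕ} (S : Set (Fin N → ZMod 2)) (v : (Fin N → ZMod 2) → ℂ)
    (γ : Fin N → ZMod 2) :
    (mix S *ᵥ v) γ = (Nat.card S : ℂ)⁻¹ *
      (if γ ∈ (Set.toFinite S).toFinset then v γ else 0) := by
  simp [mix, mulVec, dotProduct, Matrix.sum_apply, Matrix.single,
    Finset.sum_comm, Finset.mul_sum, ite_and]

lemma entry_mix {N : ℕ} (S : Set (Fin N → ZMod 2)) (α α' : Fin N → ZMod 2) :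
    star (hcol α) ⬝ᵥ (mix S *ᵥ hcol α')
      = (Nat.card S : ℂ)⁻¹ * ((2:ℂ)⁻¹)^N *
        ∑ β ∈ (Set.toFinite S).toFinset, sgn (dotp (α + α') β) := by
  have hsq : ((Real.sqrt 2 : ℂ))⁻¹ ^ N * ((Real.sqrt 2 : ℂ))⁻¹ ^ N = ((2:ℂ)⁻¹)^N := by
    rw [← mul_pow, ← mul_inv]
    norm_num [← Complex.ofReal_mul, Real.mul_self_sqrt]
  calc star (hcol α) ⬝ᵥ (mix S *ᵥ hcol α')
      = ∑ γ, (starRingEnd ℂ) (hcol α γ) * (mix S *ᵥ hcol α') γ := by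
        simp [dotProduct, Pi.star_apply, RCLike.star_def]
    _ = ∑ γ ∈ (Set.toFinite S).toFinset,
          (Nat.card S : ℂ)⁻¹ * ((starRingEnd ℂ) (hcol α γ) * hcol α' γ) := by
        rw [← Finset.sum_subset (Finset.subset_univ _)]
        · exact Finset.sum_congr rfl fun γ hγ => by rw [mix_mulVec]; simp [hγ]; ring
        · intro γ _ hγ; rw [mix_mulVec]; simp [hγ]
    _ = (Nat.card S : ℂ)⁻¹ * ((2:ℂ)⁻¹)^N *
        ∑ β ∈ (Set.toFinite S).toFinset, sgn (dotp (α + α') β) := by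
        have key : ∀ γ : Fin N → ZMod 2,
            (starRingEnd ℂ) (hcol α γ) * hcol α' γ = ((2:ℂ)⁻¹)^N * sgn (dotp (α + α') γ) := by
          intro γ
          have h1 : (starRingEnd ℂ) (hcol α γ) = hcol α γ := by
            simp [hcol, sgn, _root_.map_mul, map_pow, ← Complex.ofReal_pow, ← Complex.ofReal_inv]
          rw [h1]
          simp only [hcol, dotp_add_left, sgn_add]
          rw [← hsq]; ring
        simp only [key, ← Finset.mul_sum]
        ring

lemma zmod2_cases (z : ZMod 2) : z = 0 ∨ z = 1 := by fin_cases z <;> simp <;> [exact Or.inl rfl; exact Or.inr rfl]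

lemma sum_sgn_of_ortho {r m N : ℕ} (f : Matrix (Fin (r+m)) (Fin N) (ZMod 2))
    (x : Fin (r+m) → ZMod 2) (γ δ : Fin N → ZMod 2) (hδ : f.mulVec δ = 0)
    (hγδ : dotp γ δ ≠ 0) :
    ∑ β ∈ (Set.toFinite {γ' : Fin N → ZMod 2 | f.mulVec γ' = x}).toFinset,
      sgn (dotp γ β) = 0 := by
  have hδ0 : δ ≠ 0 := by rintro rfl; exact hγδ (by simp [dotp])
  have hγδ1 : dotp γ δ = 1 := (zmod2_cases _).resolve_left hγδ
  have hdd : ∀ β : Fin N → ZMod 2, β + δ + δ = β := by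
    intro β
    have : δ + δ = 0 := by funext i; exact CharTwo.add_self_eq_zero _
    rw [add_assoc, this, add_zero]
  have hdotr : ∀ β : Fin N → ZMod 2, dotp γ (β + δ) = dotp γ β + dotp γ δ := by
    intro β; simp [dotp, mul_add, Finset.sum_add_distrib]
  refine Finset.sum_involution (fun β _ => β + δ) ?_ ?_ ?_ ?_
  · intro β _
    rw [hdotr, hγδ1, sgn_add]
    have : sgn 1 = -1 := by norm_num [sgn, ZMod.val_one]
    rw [this]; ring
  · intro β _ _ hc
    exact hδ0 (add_eq_left.mp hc)
  · intro β hβ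
    simp only [Set.Finite.mem_toFinset, Set.mem_setOf_eq] at hβ ⊢
    rw [Matrix.mulVec_add, hβ, hδ, add_zero]
  · intro β _; exact hdd β

lemma sum_sgn_zero {N : ℕ} (S : Set (Fin N → ZMod 2)) :
    ∑ β ∈ (Set.toFinite S).toFinset, sgn (dotp (0 : Fin N → ZMod 2) β)
      = ((Set.toFinite S).toFinset.card : ℂ) := by
  have : ∀ β : Fin N → ZMod 2, sgn (dotp (0 : Fin N → ZMod 2) β) = 1 := by
    intro β; simp [dotp, sgn]
  simp [this]

lemma card_coset {r m N : ℕ} (f : Matrix (Fin (r+m)) (Fin N) (ZMod 2))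
    (hf : Function.Surjective f.mulVec) (x : Fin (r+m) → ZMod 2) :
    (Nat.card {γ : Fin N → ZMod 2 | f.mulVec γ = x} : ℂ)
      = ((Set.toFinite {γ : Fin N → ZMod 2 | f.mulVec γ = x}).toFinset.card : ℂ)
    ∧ (Nat.card {γ : Fin N → ZMod 2 | f.mulVec γ = x} : ℂ) ≠ 0 := by
  have h1 : Nat.card {γ : Fin N → ZMod 2 | f.mulVec γ = x}
      = (Set.toFinite {γ : Fin N → ZMod 2 | f.mulVec γ = x}).toFinset.card := by
    rw [Nat.card_coe_set_eq, Set.ncard_eq_toFinset_card]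
  refine ⟨by rw [h1], ?_⟩
  rw [h1]
  obtain ⟨β, hβ⟩ := hf x
  have : β ∈ (Set.toFinite {γ : Fin N → ZMod 2 | f.mulVec γ = x}).toFinset := by
    simp [hβ]
  exact_mod_cast Finset.card_ne_zero_of_mem this

/-- For two distinct syndromes `x ≠ x'`, every nonzero Hadamard-basis matrix entry of
`Δρ = ρ_x − ρ_{x'}` occurs at a position `(α,α')` with `α ⊕ α'` a nonzero element of
`C₀^⊥`; in particular all diagonal entries vanish, and if every nonzero element of
`C₀^⊥` has Hamming weight greater than `D` then nonzero entries force `d(α,α') > D`. -/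
theorem diff_mix_coset_entries (r m N D : ℕ)
    (f : Matrix (Fin (r + m)) (Fin N) (ZMod 2)) (hf : Function.Surjective f.mulVec)
    (x x' : Fin (r + m) → ZMod 2) (hxx' : x ≠ x')
    (hmin : ∀ γ : Fin N → ZMod 2,
      (∀ δ : Fin N → ZMod 2, f.mulVec δ = 0 → dotp γ δ = 0) → γ ≠ 0 →
        D < hammingDist γ 0) :
    (∀ α : Fin N → ZMod 2,
        star (hcol α) ⬝ᵥ ((mix {γ : Fin N → ZMod 2 | f.mulVec γ = x}
          - mix {γ : Fin N → ZMod 2 | f.mulVec γ = x'}) *ᵥ hcol α) = 0)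
    ∧ (∀ α α' : Fin N → ZMod 2,
        star (hcol α) ⬝ᵥ ((mix {γ : Fin N → ZMod 2 | f.mulVec γ = x}
          - mix {γ : Fin N → ZMod 2 | f.mulVec γ = x'}) *ᵥ hcol α') ≠ 0 →
        (∀ δ : Fin N → ZMod 2, f.mulVec δ = 0 → dotp (α + α') δ = 0)
          ∧ α + α' ≠ 0 ∧ D < hammingDist α α') := by
  set Sx := {γ : Fin N → ZMod 2 | f.mulVec γ = x} with hSx
  set Sx' := {γ : Fin N → ZMod 2 | f.mulVec γ = x'} with hSx'
  have hE : ∀ α α' : Fin N → ZMod 2,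
      star (hcol α) ⬝ᵥ ((mix Sx - mix Sx') *ᵥ hcol α')
        = (Nat.card Sx : ℂ)⁻¹ * ((2:ℂ)⁻¹)^N *
            ∑ β ∈ (Set.toFinite Sx).toFinset, sgn (dotp (α + α') β)
          - (Nat.card Sx' : ℂ)⁻¹ * ((2:ℂ)⁻¹)^N *
            ∑ β ∈ (Set.toFinite Sx').toFinset, sgn (dotp (α + α') β) := by
    intro α α'
    rw [Matrix.sub_mulVec, dotProduct_sub, entry_mix, entry_mix]
  have hzero : ∀ α α' : Fin N → ZMod 2, α + α' = 0 →
      star (hcol α) ⬝ᵥ ((mix Sx - mix Sx') *ᵥ hcol α') = 0 := by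
    intro α α' h0
    rw [hE, h0, sum_sgn_zero, sum_sgn_zero]
    obtain ⟨hc1, hn1⟩ := card_coset f hf x
    obtain ⟨hc2, hn2⟩ := card_coset f hf x'
    rw [← hc1, ← hc2]
    have key : ∀ c : ℂ, c ≠ 0 → c⁻¹ * ((2:ℂ)⁻¹)^N * c = ((2:ℂ)⁻¹)^N := by
      intro c hc; field_simp
    rw [key _ hn1, key _ hn2, sub_self]
  constructor
  · intro α
    apply hzero
    funext i; exact CharTwo.add_self_eq_zero _
  · intro α α' hne
    have ha : ∀ δ : Fin N → ZMod 2, f.mulVec δ = 0 → dotp (α + α') δ = 0 := by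
      intro δ hδ
      by_contra h
      exact hne (by rw [hE, sum_sgn_of_ortho f x _ δ hδ h,
        sum_sgn_of_ortho f x' _ δ hδ h]; ring)
    have hb : α + α' ≠ 0 := fun h => hne (hzero α α' h)
    refine ⟨ha, hb, ?_⟩
    have hd := hmin (α + α') ha hb
    have hiff : ∀ a b : ZMod 2, (a + b ≠ 0 ↔ a ≠ b) := by decide
    rwa [show hammingDist (α + α') 0 = hammingDist α α' from by
      simp only [hammingDist]
      congr 1
      ext i
      simp [hiff]] at hd
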